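/- Let G and H be locally compact, second countable, Hausdorff topological groups, let Γ be a discrete subgroup of G × H such that the projection π_G : G × H → G is injective on Γ, and let C ⊆ H be compact. Set D = π_G({γ ∈ Γ : π_H(γ) ∈ C}). Then D is uniformly discrete: there exists an open neighborhood U of the identity e of G such that (D⁻¹D) ∩ U ⊆ {e}, where D⁻¹D = {a⁻¹b : a, b ∈ D}. -/

import Mathlib

open Pointwise

/-- If `Γ` is a discrete subgroup of `G × H` on which the first projection is injective and
`C ⊆ H` is compact, then `D = π_G({γ ∈ Γ : π_H(γ) ∈ C})` is uniformly discrete. -/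
theorem model_set_uniformly_discrete (G H : Type*) [Group G] [Group H]
    [TopologicalSpace G] [IsTopologicalGroup G] [LocallyCompactSpace G]
    [SecondCountableTopology G] [T2Space G]
    [TopologicalSpace H] [IsTopologicalGroup H] [LocallyCompactSpace H]
    [SecondCountableTopology H] [T2Space H]
    (Γ : Subgroup (G × H)) [DiscreteTopology Γ]
    (hinj : Set.InjOn Prod.fst (Γ : Set (G × H)))
    (C : Set H) (hC : IsCompact C) :
    ∃ U : Set G, IsOpen U ∧ (1 : G) ∈ U ∧
      ((Prod.fst '' {γ : G × H | γ ∈ Γ ∧ γ.2 ∈ C})⁻¹ *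
          (Prod.fst '' {γ : G × H | γ ∈ Γ ∧ γ.2 ∈ C})) ∩ U ⊆ {1} := by
  -- K = C⁻¹ * C is compact
  have hK : IsCompact (C⁻¹ * C) := hC.inv.mul hC
  obtain ⟨N, hNc, hN⟩ := exists_compact_mem_nhds (1 : G)
  -- T = Γ ∩ (N ×ˢ K) is finite
  have hΓclosed : IsClosed (Γ : Set (G × H)) := Subgroup.isClosed_of_discrete
  set T : Set (G × H) := (Γ : Set (G × H)) ∩ (N ×ˢ (C⁻¹ * C)) with hT
  have hTsub : T ⊆ (Γ : Set (G × H)) := Set.inter_subset_left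
  have hTdisc : DiscreteTopology T := by
    have : DiscreteTopology (Γ : Set (G × H)) := ‹_›
    exact DiscreteTopology.of_subset this hTsub
  have hTfin : T.Finite := by
    have hTcomp : IsCompact T :=
      ((hNc.prod hK).inter_left hΓclosed)
    exact hTcomp.finite (isDiscrete_iff_discreteTopology.mpr hTdisc)
  set F : Set G := Prod.fst '' (T \ {1}) with hF
  have hFfin : F.Finite := hTfin.diff.image _
  refine ⟨interior N \ F, isOpen_interior.sdiff hFfin.isClosed, ?_, ?_⟩
  · constructor
    · exact mem_interior_iff_mem_nhds.mpr hN
    · rintro ⟨γ, ⟨hγT, hγne⟩, hγ1⟩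
      apply hγne
      exact hinj (hTsub hγT) (Subgroup.one_mem Γ) hγ1
  · rintro z ⟨hz, hzU⟩
    obtain ⟨p, hp, q, hq, rfl⟩ := hz
    rw [Set.mem_inv] at hp
    obtain ⟨γ₁, ⟨hγ₁Γ, hγ₁C⟩, hγ₁⟩ := hp
    obtain ⟨γ₂, ⟨hγ₂Γ, hγ₂C⟩, hγ₂⟩ := hq
    set γ := γ₁⁻¹ * γ₂ with hγdef
    have hγΓ : γ ∈ Γ := Γ.mul_mem (Γ.inv_mem hγ₁Γ) hγ₂Γ
    have hγ1 : γ.1 = p * q := by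
      simp [hγdef, hγ₁, hγ₂]
    have hγT : γ ∈ T := by
      refine ⟨hγΓ, ?_, ?_⟩
      · rw [hγ1]; exact interior_subset hzU.1
      · exact Set.mul_mem_mul (Set.inv_mem_inv.mpr hγ₁C) hγ₂C
    have : γ = 1 := by
      by_contra hne
      exact hzU.2 ⟨γ, ⟨hγT, hne⟩, hγ1.symm ▸ rfl⟩
    show p * q ∈ ({1} : Set G)
    rw [Set.mem_singleton_iff, ← hγ1, this]
    rfl
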